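/- Let X be a complex Hilbert space and let S be a compact, self-adjoint, injective, nonnegative continuous linear operator on X (⟨Su, u⟩ ≥ 0 for all u and ker S = {0}). Let k be a nonzero real number such that 1/k² is not an eigenvalue of S. Let W be the closed linear span of all eigenvectors of S corresponding to eigenvalues μ with μ > 1/k², let P_W be the orthogonal projection of X onto W, and set T := id_X − 2P_W. Then T is bijective and there exists γ > 0 such that Re⟨(id_X − k²S)(Tu), u⟩ ≥ γ‖u‖² for all u ∈ X; that is, the operator id_X − k²S is T-coercive. -/

import Mathlib

open ContinuousLinearMap Complex ComplexConjugate

section HelmholtzAux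

variable {X : Type*} [NormedAddCommGroup X] [InnerProductSpace ℂ X] [CompleteSpace X]

local notation "⟪" x ", " y "⟫" => @inner ℂ _ _ x y

lemma sa_inner (S : X →L[ℂ] X) (hSsa : IsSelfAdjoint S) (x y : X) :
    ⟪S x, y⟫ = ⟪x, S y⟫ := by
  conv_lhs => rw [← hSsa.adjoint_eq]
  exact ContinuousLinearMap.adjoint_inner_left S y x

lemma sa_re_inner_real (S : X →L[ℂ] X) (hSsa : IsSelfAdjoint S) (x : X) :
    (⟪S x, x⟫ : ℂ) = ((⟪S x, x⟫.re : ℝ) : ℂ) := by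
  have h1 : conj (⟪S x, x⟫ : ℂ) = ⟪S x, x⟫ := by
    rw [inner_conj_symm, sa_inner S hSsa]
  exact (Complex.conj_eq_iff_re.mp h1).symm

/-- Cauchy–Schwarz for a positive self-adjoint operator. -/
lemma pos_cauchy_schwarz (S : X →L[ℂ] X) (hSsa : IsSelfAdjoint S)
    (hSpos : ∀ u : X, 0 ≤ (⟪S u, u⟫ : ℂ).re) (x y : X) :
    ‖(⟪S x, y⟫ : ℂ)‖ ^ 2 ≤ (⟪S x, x⟫ : ℂ).re * (⟪S y, y⟫ : ℂ).re := by
  rcases eq_or_ne (⟪S x, y⟫ : ℂ) 0 with hp | hp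
  · rw [hp]; simpa using mul_nonneg (hSpos x) (hSpos y)
  · set a : ℝ := (⟪S x, x⟫ : ℂ).re with ha
    set b : ℝ := (⟪S y, y⟫ : ℂ).re with hb
    set p : ℂ := ⟪S x, y⟫ with hpdef
    set m : ℂ := conj p with hm
    have hyx : (⟪S y, x⟫ : ℂ) = m := by
      rw [hm, hpdef, inner_conj_symm]
      exact sa_inner S hSsa y x
    have h2 : conj m = p := by rw [hm, Complex.conj_conj]
    have h3 : p * m = ((‖p‖ : ℝ) : ℂ) ^ 2 := by
      rw [hm, Complex.mul_conj']
    have key : ∀ t : ℝ, 0 ≤ a * (t * t) + (2 * ‖p‖ ^ 2) * t + (‖p‖ ^ 2 * b) := by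
      intro t
      have h0 := hSpos ((t : ℂ) • x + m • y)
      have hC : (⟪S ((t : ℂ) • x + m • y), (t : ℂ) • x + m • y⟫ : ℂ)
          = ((a * (t * t) + (2 * ‖p‖ ^ 2) * t + (‖p‖ ^ 2 * b) : ℝ) : ℂ) := by
        simp only [map_add, map_smul, inner_add_left, inner_add_right, inner_smul_left,
          inner_smul_right, Complex.conj_ofReal]
        rw [hyx, ← hpdef, h2, sa_re_inner_real S hSsa x, sa_re_inner_real S hSsa y, ← ha, ← hb]
        push_cast
        linear_combination (2 * (t : ℂ) + (b : ℂ)) * h3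
      rw [hC] at h0
      rwa [Complex.ofReal_re] at h0
    have hd := discrim_le_zero key
    rw [discrim] at hd
    have hpos : (0:ℝ) < ‖p‖ ^ 2 := by
      have := norm_pos_iff.mpr hp
      positivity
    nlinarith [hpos]

lemma eig_orth (S : X →L[ℂ] X) (hSsa : IsSelfAdjoint S) {μ ν : ℝ} (hne : μ ≠ ν) {u v : X}
    (hu : S u = (μ : ℂ) • u) (hv : S v = (ν : ℂ) • v) : ⟪u, v⟫ = 0 := by
  have h := sa_inner S hSsa u v
  rw [hu, hv, inner_smul_left, inner_smul_right, Complex.conj_ofReal] at h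
  have h2 : ((μ : ℂ) - ν) * ⟪u, v⟫ = 0 := by linear_combination h
  rcases mul_eq_zero.mp h2 with h3 | h3
  · exfalso; apply hne
    have : (μ : ℂ) = ν := by linear_combination h3
    exact_mod_cast this
  · exact h3

/-- A bounded sequence has a subsequence whose image under a compact operator converges. -/
lemma compact_subseq (S : X →L[ℂ] X) (hScompact : IsCompactOperator ⇑S)
    (e : ℕ → X) (he : ∀ n, ‖e n‖ ≤ 1) :
    ∃ a : X, ∃ φ : ℕ → ℕ, StrictMono φ ∧
      Filter.Tendsto (fun n => S (e (φ n))) Filter.atTop (nhds a) := by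
  obtain ⟨K, hK, hsub⟩ :=
    IsCompactOperator.image_subset_compact_of_bounded (f := (S : X →ₗ[ℂ] X)) hScompact
      (Metric.isBounded_closedBall (x := (0 : X)) (r := 1))
  have hmem : ∀ n, S (e n) ∈ K := by
    intro n
    exact hsub ⟨e n, by simpa [Metric.mem_closedBall] using he n, rfl⟩
  obtain ⟨a, _, φ, hφ, hconv⟩ := hK.tendsto_subseq hmem
  exact ⟨a, φ, hφ, hconv⟩

lemma finite_evs (S : X →L[ℂ] X) (hScompact : IsCompactOperator ⇑S) (hSsa : IsSelfAdjoint S)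
    (k : ℝ) (hk : k ≠ 0) :
    {μ : ℝ | 1 / k ^ 2 < μ ∧ ∃ u : X, u ≠ 0 ∧ S u = (μ : ℂ) • u}.Finite := by
  set M := {μ : ℝ | 1 / k ^ 2 < μ ∧ ∃ u : X, u ≠ 0 ∧ S u = (μ : ℂ) • u} with hM
  by_contra hinf
  have hMinf : M.Infinite := hinf
  set f := hMinf.natEmbedding with hf
  set μ : ℕ → ℝ := fun n => (f n : ℝ) with hμ
  have hμinj : Function.Injective μ := fun a b h => f.injective (Subtype.ext h)
  have hμM : ∀ n, μ n ∈ M := fun n => (f n).2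
  have hδ : 0 < 1 / k ^ 2 := by positivity
  -- unit eigenvectors
  have hex : ∀ n, ∃ e : X, ‖e‖ = 1 ∧ S e = (μ n : ℂ) • e := by
    intro n
    obtain ⟨-, u, hu0, huev⟩ := hμM n
    refine ⟨(‖u‖ : ℂ)⁻¹ • u, ?_, ?_⟩
    · rw [norm_smul]
      simp [norm_ne_zero_iff.mpr hu0]
    · rw [map_smul, huev, smul_comm]
  choose e he heev using hex
  obtain ⟨a, φ, hφ, hconv⟩ := compact_subseq S hScompact e (fun n => (he n).le)
  have hcauchy := hconv.cauchySeq
  rw [Metric.cauchySeq_iff] at hcauchy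
  obtain ⟨N, hN⟩ := hcauchy (1 / k ^ 2) hδ
  have h1 := hN (N + 1) (by omega) N (by omega)
  -- distance computation
  have hij : μ (φ (N + 1)) ≠ μ (φ N) := fun h => by
    have := hμinj h
    have := hφ.injective this
    omega
  have horth : ⟪e (φ (N + 1)), e (φ N)⟫ = 0 :=
    eig_orth S hSsa hij (heev _) (heev _)
  have hdist : dist (S (e (φ (N + 1)))) (S (e (φ N))) ^ 2
      = μ (φ (N + 1)) ^ 2 + μ (φ N) ^ 2 := by
    rw [dist_eq_norm, heev, heev, @norm_sub_sq ℂ]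
    rw [inner_smul_left, inner_smul_right, horth]
    simp only [mul_zero, map_mul, Complex.zero_re, mul_zero]
    rw [norm_smul, norm_smul]
    have h1 : (0:ℝ) < μ (φ (N+1)) := hδ.trans (hμM _).1
    have h2 : (0:ℝ) < μ (φ N) := hδ.trans (hμM _).1
    simp only [Complex.norm_real, Real.norm_eq_abs, abs_of_pos h1, abs_of_pos h2,
      he, mul_one, map_zero]
    ring
  have hlow : (1 / k ^ 2) ^ 2 + (1 / k ^ 2) ^ 2 ≤ dist (S (e (φ (N + 1)))) (S (e (φ N))) ^ 2 := by
    rw [hdist]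
    have h1 := (hμM (φ (N+1))).1
    have h2 := (hμM (φ N)).1
    nlinarith
  nlinarith [dist_nonneg (x := S (e (φ (N + 1)))) (y := S (e (φ N)))]

lemma re_inner_self (x : X) : (⟪x, x⟫ : ℂ).re = ‖x‖ ^ 2 := by
  exact @inner_self_eq_norm_sq ℂ _ _ _ _ x

lemma W_lower (S : X →L[ℂ] X) (hScompact : IsCompactOperator ⇑S) (hSsa : IsSelfAdjoint S)
    (k : ℝ) (hk : k ≠ 0) :
    ∃ c : ℝ, 1 / k ^ 2 < c ∧ ∀ w ∈ (Submodule.span ℂ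
      {u : X | ∃ μ : ℝ, 1 / k ^ 2 < μ ∧ u ≠ 0 ∧ S u = (μ : ℂ) • u}).topologicalClosure,
      c * ‖w‖ ^ 2 ≤ (⟪S w, w⟫ : ℂ).re := by
  classical
  have hδ : (0:ℝ) < 1 / k ^ 2 := by positivity
  have hfin := finite_evs S hScompact hSsa k hk
  set Mf : Finset ℝ := hfin.toFinset with hMf
  set c : ℝ := if h : Mf.Nonempty then Mf.min' h else 2 / k ^ 2 with hc
  have hcgt : 1 / k ^ 2 < c := by
    rw [hc]
    split_ifs with h
    · exact (hfin.mem_toFinset.mp (Mf.min'_mem h)).1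
    · have hk2 : (0:ℝ) < k ^ 2 := by positivity
      rw [div_lt_div_iff₀ hk2 hk2]
      nlinarith
  refine ⟨c, hcgt, ?_⟩
  set Eig : ℝ → Submodule ℂ X := fun μ => LinearMap.ker ((S - (μ : ℂ) • ContinuousLinearMap.id ℂ X : X →L[ℂ] X) : X →ₗ[ℂ] X)
    with hEig
  have hEigMem : ∀ (μ : ℝ) (u : X), u ∈ Eig μ ↔ S u = (μ : ℂ) • u := by
    intro μ u
    rw [hEig]
    simp only [LinearMap.mem_ker]
    constructor
    · intro h
      have h2 : S u - (μ:ℂ) • u = 0 := h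
      exact sub_eq_zero.mp h2
    · intro h
      show S u - (μ:ℂ) • u = 0
      rw [h, sub_self]
  -- key inequality on the span
  have hspan : ∀ w ∈ Submodule.span ℂ
      {u : X | ∃ μ : ℝ, 1 / k ^ 2 < μ ∧ u ≠ 0 ∧ S u = (μ : ℂ) • u},
      c * ‖w‖ ^ 2 ≤ (⟪S w, w⟫ : ℂ).re := by
    intro w hw
    have hw2 : w ∈ ⨆ μ ∈ Mf, Eig μ := by
      refine Submodule.span_le.mpr ?_ hw
      rintro u ⟨μ, hμ, hu0, hev⟩
      have hμMf : μ ∈ Mf := by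
        rw [hMf, Set.Finite.mem_toFinset]
        exact ⟨hμ, u, hu0, hev⟩
      have : u ∈ Eig μ := (hEigMem μ u).mpr hev
      exact SetLike.le_def.mp (le_iSup₂ (f := fun μ _ => Eig μ) μ hμMf) this
    rw [Submodule.mem_iSup_finset_iff_exists_sum] at hw2
    obtain ⟨g, hg⟩ := hw2
    set v : ℝ → X := fun i => (g i : X) with hv
    have hvev : ∀ i, S (v i) = (i : ℂ) • v i := fun i => (hEigMem i (v i)).mp (g i).2
    have horth : ∀ i ∈ Mf, ∀ j ∈ Mf, i ≠ j → (⟪v i, v j⟫ : ℂ) = 0 := by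
      intro i _ j _ hij
      exact eig_orth S hSsa hij (hvev i) (hvev j)
    have hin : ∀ i ∈ Mf, (⟪v i, w⟫ : ℂ) = ⟪v i, v i⟫ := by
      intro i hi
      rw [← hg, inner_sum]
      exact Finset.sum_eq_single_of_mem i hi fun j hj hji => horth i hi j hj (Ne.symm hji)
    have hSww : (⟪S w, w⟫ : ℂ).re = ∑ i ∈ Mf, (i : ℝ) * ‖v i‖ ^ 2 := by
      conv_lhs => rw [← hg]
      rw [map_sum, sum_inner]
      rw [Complex.re_sum]
      refine Finset.sum_congr rfl fun i hi => ?_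
      rw [hvev i, inner_smul_left, Complex.conj_ofReal, hg, hin i hi]
      rw [Complex.re_ofReal_mul, re_inner_self]
    have hnorm : ‖w‖ ^ 2 = ∑ i ∈ Mf, ‖v i‖ ^ 2 := by
      rw [← re_inner_self]
      conv_lhs => rw [← hg]
      rw [sum_inner, Complex.re_sum]
      refine Finset.sum_congr rfl fun i hi => ?_
      rw [hg, hin i hi, re_inner_self]
    rw [hSww, hnorm, Finset.mul_sum]
    refine Finset.sum_le_sum fun i hi => ?_
    have hcle : c ≤ i := by
      rw [hc, dif_pos ⟨i, hi⟩]
      exact Finset.min'_le _ _ hi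
    exact mul_le_mul_of_nonneg_right hcle (sq_nonneg _)
  -- pass to closure
  have hclosed : IsClosed {w : X | c * ‖w‖ ^ 2 ≤ (⟪S w, w⟫ : ℂ).re} := by
    apply isClosed_le
    · fun_prop
    · exact Complex.continuous_re.comp (Continuous.inner S.continuous continuous_id)
  intro w hw
  have hw' : w ∈ closure (Submodule.span ℂ
      {u : X | ∃ μ : ℝ, 1 / k ^ 2 < μ ∧ u ≠ 0 ∧ S u = (μ : ℂ) • u} : Set X) := by
    rw [← Submodule.topologicalClosure_coe]
    exact hw
  exact closure_minimal hspan hclosed hw'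

lemma W_invariant (S : X →L[ℂ] X) (k : ℝ) (W : Submodule ℂ X)
    (hW : W = (Submodule.span ℂ
      {u : X | ∃ μ : ℝ, 1 / k ^ 2 < μ ∧ u ≠ 0 ∧ S u = (μ : ℂ) • u}).topologicalClosure) :
    ∀ w ∈ W, S w ∈ W := by
  have hWc : IsClosed (W : Set X) := by
    rw [hW]; exact Submodule.isClosed_topologicalClosure _
  have hle : W ≤ Submodule.comap (S : X →ₗ[ℂ] X) W := by
    conv_lhs => rw [hW]
    apply Submodule.topologicalClosure_minimal
    · rw [Submodule.span_le]
      rintro u ⟨μ, hμ, hu0, hev⟩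
      simp only [Set.mem_setOf_eq, SetLike.mem_coe, Submodule.mem_comap]
      show S u ∈ W
      rw [hev, hW]
      have hu : u ∈ (Submodule.span ℂ
          {u : X | ∃ μ : ℝ, 1 / k ^ 2 < μ ∧ u ≠ 0 ∧ S u = (μ : ℂ) • u}).topologicalClosure :=
        Submodule.le_topologicalClosure _
          (Submodule.subset_span (Set.mem_setOf_eq ▸ ⟨μ, hμ, hu0, hev⟩))
      exact Submodule.smul_mem _ _ hu
    · exact hWc.preimage S.continuous
  intro w hw
  exact hle hw

lemma Wperp_invariant (S : X →L[ℂ] X) (hSsa : IsSelfAdjoint S) (W : Submodule ℂ X)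
    (hWinv : ∀ w ∈ W, S w ∈ W) : ∀ v ∈ Wᗮ, S v ∈ Wᗮ := by
  intro v hv
  rw [Submodule.mem_orthogonal]
  intro w hw
  rw [← sa_inner S hSsa]
  exact (Submodule.mem_orthogonal W v).mp hv (S w) (hWinv w hw)

lemma Wperp_upper (S : X →L[ℂ] X) (hScompact : IsCompactOperator ⇑S) (hSsa : IsSelfAdjoint S)
    (hSpos : ∀ u : X, 0 ≤ (⟪S u, u⟫ : ℂ).re) (k : ℝ) (hk : k ≠ 0)
    (hknotev : ∀ u : X, S u = ((1 / k ^ 2 : ℝ) : ℂ) • u → u = 0)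
    (W : Submodule ℂ X)
    (hW : W = (Submodule.span ℂ
      {u : X | ∃ μ : ℝ, 1 / k ^ 2 < μ ∧ u ≠ 0 ∧ S u = (μ : ℂ) • u}).topologicalClosure) :
    ∃ m : ℝ, m < 1 / k ^ 2 ∧ ∀ v ∈ Wᗮ, (⟪S v, v⟫ : ℂ).re ≤ m * ‖v‖ ^ 2 := by
  have hδ : (0:ℝ) < 1 / k ^ 2 := by positivity
  have hWinv := W_invariant S k W hW
  have hWperp := Wperp_invariant S hSsa W hWinv
  set R : Set ℝ := (fun v : X => (⟪S v, v⟫ : ℂ).re) '' {v : X | v ∈ Wᗮ ∧ ‖v‖ = 1} with hR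
  have hbdd : BddAbove R := by
    refine ⟨‖S‖, ?_⟩
    rintro r ⟨v, ⟨hv, hv1⟩, rfl⟩
    calc (⟪S v, v⟫ : ℂ).re ≤ ‖(⟪S v, v⟫ : ℂ)‖ := Complex.re_le_norm _
    _ ≤ ‖S v‖ * ‖v‖ := norm_inner_le_norm _ _
    _ ≤ ‖S‖ * ‖v‖ * ‖v‖ := by
        have := S.le_opNorm v
        nlinarith [norm_nonneg (S v), norm_nonneg v, norm_nonneg S]
    _ = ‖S‖ := by rw [hv1]; ring
  set m : ℝ := sSup R with hm
  have hbound : ∀ v ∈ Wᗮ, (⟪S v, v⟫ : ℂ).re ≤ m * ‖v‖ ^ 2 := by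
    intro v hv
    rcases eq_or_ne v 0 with rfl | hv0
    · simp
    · have hnv : (0:ℝ) < ‖v‖ := norm_pos_iff.mpr hv0
      set v' : X := ((‖v‖ : ℝ)⁻¹ : ℂ) • v with hv'
      have hv'1 : ‖v'‖ = 1 := by
        rw [hv', norm_smul]
        simp [norm_inv, hnv.ne']
      have hv'mem : v' ∈ Wᗮ := Submodule.smul_mem _ _ hv
      have hle : (⟪S v', v'⟫ : ℂ).re ≤ m := le_csSup hbdd ⟨v', ⟨hv'mem, hv'1⟩, rfl⟩
      have hcalc : (⟪S v', v'⟫ : ℂ).re = (‖v‖^2)⁻¹ * (⟪S v, v⟫ : ℂ).re := by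
        rw [hv', map_smul, inner_smul_left, inner_smul_right, map_inv₀,
          Complex.conj_ofReal, ← mul_assoc, ← Complex.ofReal_inv, ← Complex.ofReal_mul,
          Complex.re_ofReal_mul, sq, mul_inv]
      rw [hcalc] at hle
      have h2 : (0:ℝ) < ‖v‖^2 := by positivity
      calc (⟪S v, v⟫ : ℂ).re = ‖v‖^2 * ((‖v‖^2)⁻¹ * (⟪S v, v⟫ : ℂ).re) := by
            field_simp
      _ ≤ ‖v‖^2 * m := by exact mul_le_mul_of_nonneg_left hle h2.le
      _ = m * ‖v‖^2 := by ring
  refine ⟨m, ?_, hbound⟩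
  by_contra hge
  push_neg at hge
  -- hge : 1 / k ^ 2 ≤ m
  have hm0 : (0:ℝ) < m := lt_of_lt_of_le hδ hge
  have hRne : R.Nonempty := by
    by_contra hne
    rw [Set.not_nonempty_iff_eq_empty] at hne
    rw [hm, hne, Real.sSup_empty] at hm0
    exact lt_irrefl 0 hm0
  obtain ⟨r, hrmono, hrtend, hrmem⟩ := exists_seq_tendsto_sSup hRne hbdd
  rw [← hm] at hrtend
  choose v hvmem hvr using hrmem
  have hvr' : ∀ n, (⟪S (v n), v n⟫ : ℂ).re = r n := hvr
  have hv1 : ∀ n, ‖v n‖ = 1 := fun n => (hvmem n).2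
  have hvW : ∀ n, v n ∈ Wᗮ := fun n => (hvmem n).1
  -- ‖S v‖² ≤ m * re⟪S v, v⟫ for v ∈ Wᗮ with ‖v‖ ≤ whatever
  have hSv : ∀ v ∈ Wᗮ, ‖S v‖ ^ 2 ≤ m * (⟪S v, v⟫ : ℂ).re := by
    intro v hv
    rcases eq_or_ne (S v) 0 with h0 | h0
    · rw [h0]; simpa using mul_nonneg hm0.le (hSpos v)
    · have hcs := pos_cauchy_schwarz S hSsa hSpos v (S v)
      have h1 : (⟪S v, S v⟫ : ℂ) = ((‖S v‖^2 : ℝ) : ℂ) := by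
        rw [@inner_self_eq_norm_sq_to_K ℂ]; norm_cast
      rw [h1] at hcs
      have h2 : ‖((‖S v‖^2 : ℝ) : ℂ)‖ = ‖S v‖^2 := by
        simp
      rw [h2] at hcs
      have h3 : (⟪S (S v), S v⟫ : ℂ).re ≤ m * ‖S v‖^2 := hbound (S v) (hWperp v hv)
      have h4 : (0:ℝ) < ‖S v‖^2 := pow_pos (norm_pos_iff.mpr h0) 2
      nlinarith [hSpos v]
  -- S v n - m • v n → 0
  have hdiff : Filter.Tendsto (fun n => S (v n) - (m : ℂ) • v n) Filter.atTop (nhds 0) := by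
    rw [tendsto_zero_iff_norm_tendsto_zero]
    have hb : ∀ n, ‖S (v n) - (m : ℂ) • v n‖ ^ 2 ≤ m ^ 2 - m * r n := by
      intro n
      rw [@norm_sub_sq ℂ, inner_smul_right, RCLike.re_to_complex]
      have h5 : ‖(m : ℂ) • v n‖ ^ 2 = m ^ 2 := by
        rw [norm_smul, hv1 n, Complex.norm_real, Real.norm_eq_abs, abs_of_pos hm0, mul_one]
      rw [h5]
      have h6 : ((m:ℂ) * ⟪S (v n), v n⟫).re = m * r n := by
        rw [Complex.re_ofReal_mul, hvr' n]
      rw [h6]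
      have h7 := hSv (v n) (hvW n)
      rw [hvr' n] at h7
      nlinarith [hSpos (v n)]
    have hb2 : Filter.Tendsto (fun n => m ^ 2 - m * r n) Filter.atTop (nhds 0) := by
      have h8 := (hrtend.const_mul m).const_sub (m ^ 2)
      have h9 : m ^ 2 - m * m = 0 := by ring
      rw [h9] at h8
      exact h8
    have hsq : Filter.Tendsto (fun n => ‖S (v n) - (m:ℂ) • v n‖ ^ 2) Filter.atTop (nhds 0) :=
      squeeze_zero (fun n => sq_nonneg _) hb hb2
    have hsqrt := hsq.sqrt
    rw [Real.sqrt_zero] at hsqrt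
    exact hsqrt.congr fun n => Real.sqrt_sq (norm_nonneg _)
  obtain ⟨a, φ, hφ, hconv⟩ := compact_subseq S hScompact v (fun n => (hv1 n).le)
  have hmC : (m : ℂ) ≠ 0 := by exact_mod_cast hm0.ne'
  have hdiffφ : Filter.Tendsto (fun n => S (v (φ n)) - (m:ℂ) • v (φ n)) Filter.atTop (nhds 0) :=
    hdiff.comp hφ.tendsto_atTop
  have hmv : Filter.Tendsto (fun n => (m:ℂ) • v (φ n)) Filter.atTop (nhds a) := by
    have := hconv.sub hdiffφ
    simpa using this
  have hvφ : Filter.Tendsto (fun n => v (φ n)) Filter.atTop (nhds (((m:ℂ)⁻¹) • a)) := by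
    have h2 := hmv.const_smul ((m:ℂ)⁻¹)
    exact h2.congr fun n => by rw [smul_smul, inv_mul_cancel₀ hmC, one_smul]
  set vstar : X := ((m:ℂ)⁻¹) • a with hvstar
  have hvstarW : vstar ∈ Wᗮ := by
    have hcl : IsClosed (Wᗮ : Set X) := Submodule.isClosed_orthogonal W
    exact hcl.mem_of_tendsto hvφ (Filter.Eventually.of_forall fun n => hvW (φ n))
  have hnorm1 : ‖vstar‖ = 1 := by
    have hconst : Filter.Tendsto (fun n => ‖v (φ n)‖) Filter.atTop (nhds 1) := by
      simpa [hv1] using (tendsto_const_nhds : Filter.Tendsto (fun _ : ℕ => (1:ℝ))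
        Filter.atTop (nhds 1))
    exact tendsto_nhds_unique hvφ.norm hconst
  have hvstar0 : vstar ≠ 0 := by
    intro h
    rw [h, norm_zero] at hnorm1
    norm_num at hnorm1
  have hSvstar : S vstar = (m : ℂ) • vstar := by
    have h1 : Filter.Tendsto (fun n => S (v (φ n))) Filter.atTop (nhds (S vstar)) :=
      (S.continuous.tendsto _).comp hvφ
    have ha : S vstar = a := tendsto_nhds_unique h1 hconv
    have h2 : (m : ℂ) • vstar = a := by
      rw [hvstar, smul_smul, mul_inv_cancel₀ hmC, one_smul]
    rw [ha, h2]
  rcases eq_or_lt_of_le hge with heq | hlt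
  · exact hvstar0 (hknotev vstar (by rw [hSvstar, ← heq]))
  · have hvstarW' : vstar ∈ W := by
      rw [hW]
      exact Submodule.le_topologicalClosure _
        (Submodule.subset_span ⟨m, hlt, hvstar0, hSvstar⟩)
    have : (⟪vstar, vstar⟫ : ℂ) = 0 :=
      (Submodule.mem_orthogonal W vstar).mp hvstarW vstar hvstarW'
    exact hvstar0 (inner_self_eq_zero.mp this)

end HelmholtzAux

local notation "⟪" x ", " y "⟫" => @inner ℂ _ _ x y

/-- Let `S` be a compact, self-adjoint, injective, nonnegative continuous linear operator on a
complex Hilbert space `X`, and let `k ≠ 0` be real such that `1/k²` is not an eigenvalue of `S`.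
With `W` the closed linear span of eigenvectors of `S` for eigenvalues `μ > 1/k²`, `P_W` the
orthogonal projection onto `W` and `T := id - 2 P_W`, the operator `T` is bijective and
`id - k² S` is T-coercive: there is `γ > 0` with `Re ⟨(id - k²S)(Tu), u⟩ ≥ γ ‖u‖²`. -/
theorem helmholtz_tcoercivity {X : Type*} [NormedAddCommGroup X] [InnerProductSpace ℂ X]
    [CompleteSpace X] (S : X →L[ℂ] X)
    (hScompact : IsCompactOperator ⇑S) (hSsa : IsSelfAdjoint S)
    (hSinj : Function.Injective S)
    (hSpos : ∀ u : X, 0 ≤ (inner ℂ (S u) u : ℂ).re)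
    (k : ℝ) (hk : k ≠ 0)
    (hknotev : ∀ u : X, S u = ((1 / k ^ 2 : ℝ) : ℂ) • u → u = 0)
    (W : Submodule ℂ X)
    (hW : W = (Submodule.span ℂ
      {u : X | ∃ μ : ℝ, 1 / k ^ 2 < μ ∧ u ≠ 0 ∧ S u = (μ : ℂ) • u}).topologicalClosure)
    [W.HasOrthogonalProjection] :
    Function.Bijective
      ⇑(ContinuousLinearMap.id ℂ X - 2 • (W.subtypeL.comp W.orthogonalProjectionOnto)) ∧
    ∃ γ : ℝ, 0 < γ ∧ ∀ u : X,
      γ * ‖u‖ ^ 2 ≤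
        (inner ℂ ((ContinuousLinearMap.id ℂ X - (k : ℂ) ^ 2 • S)
          ((ContinuousLinearMap.id ℂ X - 2 • (W.subtypeL.comp W.orthogonalProjectionOnto)) u))
          u : ℂ).re := by
  have hk2 : (0:ℝ) < k ^ 2 := by positivity
  set Pc : X →L[ℂ] X := W.subtypeL.comp W.orthogonalProjectionOnto with hPc
  set T : X →L[ℂ] X := ContinuousLinearMap.id ℂ X - 2 • Pc with hT
  have hPcapp : ∀ u : X, Pc u = (W.orthogonalProjectionOnto u : X) := fun u => rfl
  have hPcmem : ∀ u : X, Pc u ∈ W := fun u => (W.orthogonalProjectionOnto u).2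
  have hPcidem : ∀ u : X, Pc (Pc u) = Pc u := by
    intro u
    rw [hPcapp, hPcapp, Submodule.orthogonalProjectionOnto_mem_subspace_eq_self]
  have hTapp : ∀ u : X, T u = u - 2 • Pc u := by
    intro u
    rw [hT]
    simp [ContinuousLinearMap.sub_apply, ContinuousLinearMap.smul_apply]
  have hTT : ∀ u : X, T (T u) = u := by
    intro u
    rw [hTapp, hTapp]
    rw [map_sub, map_nsmul, hPcidem]
    abel
  constructor
  · exact Function.bijective_iff_has_inverse.mpr ⟨T, hTT, hTT⟩
  · obtain ⟨c, hcgt, hcbound⟩ := W_lower S hScompact hSsa k hk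
    obtain ⟨m, hmlt, hmbound⟩ := Wperp_upper S hScompact hSsa hSpos k hk hknotev W hW
    set γ : ℝ := min (1 - k^2 * m) (k^2 * c - 1) with hγ
    have hγ1 : 0 < 1 - k^2 * m := by
      rw [lt_div_iff₀ hk2] at hmlt
      nlinarith
    have hγ2 : 0 < k^2 * c - 1 := by
      rw [div_lt_iff₀ hk2] at hcgt
      nlinarith
    refine ⟨γ, lt_min hγ1 hγ2, fun u => ?_⟩
    set w : X := Pc u with hw
    set v : X := u - w with hv
    have hu : u = w + v := by rw [hv]; abel
    have hwW : w ∈ W := hPcmem u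
    have hvW : v ∈ Wᗮ := Submodule.sub_starProjection_mem_orthogonal (K := W) u
    have hWinv := W_invariant S k W hW
    have hWperpinv := Wperp_invariant S hSsa W hWinv
    have hwv : (⟪w, v⟫ : ℂ) = 0 := (Submodule.mem_orthogonal W v).mp hvW w hwW
    have hvw : (⟪v, w⟫ : ℂ) = 0 := by
      rw [← inner_conj_symm, hwv, map_zero]
    have hSwv : (⟪S w, v⟫ : ℂ) = 0 :=
      (Submodule.mem_orthogonal W v).mp hvW (S w) (hWinv w hwW)
    have hSvw : (⟪S v, w⟫ : ℂ) = 0 := by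
      rw [← inner_conj_symm, ← sa_inner S hSsa w v, hSwv, map_zero]
    have hTu : T u = v - w := by
      rw [hTapp]
      rw [hv, two_smul]
      abel
    have hexp : (⟪(ContinuousLinearMap.id ℂ X - (k : ℂ) ^ 2 • S) (T u), u⟫ : ℂ)
        = (⟪v, v⟫ - ⟪w, w⟫) - ((k^2 : ℝ) : ℂ) * (⟪S v, v⟫ - ⟪S w, w⟫) := by
      rw [hTu]
      conv_lhs => rw [hu]
      simp only [ContinuousLinearMap.sub_apply, ContinuousLinearMap.smul_apply,
        ContinuousLinearMap.id_apply, map_sub, inner_sub_left, inner_smul_left,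
        inner_add_right, map_pow, Complex.conj_ofReal, hwv, hvw, hSwv, hSvw]
      push_cast
      ring
    have hre : (⟪(ContinuousLinearMap.id ℂ X - (k : ℂ) ^ 2 • S) (T u), u⟫ : ℂ).re
        = (‖v‖^2 - ‖w‖^2) - k^2 * ((⟪S v, v⟫ : ℂ).re - (⟪S w, w⟫ : ℂ).re) := by
      rw [hexp]
      rw [Complex.sub_re, Complex.sub_re, Complex.re_ofReal_mul, Complex.sub_re,
        re_inner_self, re_inner_self]
    have hnormsum : ‖u‖^2 = ‖w‖^2 + ‖v‖^2 := by
      conv_lhs => rw [hu]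
      rw [@norm_add_sq ℂ, RCLike.re_to_complex, hwv]
      simp
    have h1 : c * ‖w‖^2 ≤ (⟪S w, w⟫ : ℂ).re := by
      apply hcbound
      rw [← hW]
      exact hwW
    have h2 : (⟪S v, v⟫ : ℂ).re ≤ m * ‖v‖^2 := hmbound v hvW
    have hγle1 : γ ≤ 1 - k^2 * m := min_le_left _ _
    have hγle2 : γ ≤ k^2 * c - 1 := min_le_right _ _
    rw [hre, hnormsum]
    nlinarith [sq_nonneg ‖w‖, sq_nonneg ‖v‖]
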